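/- Let ζ ∈ ℂ be a primitive 16th root of unity. If (x, y, t) ∈ ℂ³ satisfies y² = x³ + t³(t⁴ − 1)x and x ≠ 0, then the point σ_AST(x, y, t) = (ζ⁶·(y² − x³)/x², ζ⁹·(x³y − y³)/x³, ζ⁴t) again satisfies the same equation: (ζ⁹(x³y − y³)/x³)² = (ζ⁶(y² − x³)/x²)³ + (ζ⁴t)³((ζ⁴t)⁴ − 1)·(ζ⁶(y² − x³)/x²). -/

import Mathlib

/-- The map `σ_AST` of Al Tabbaa–Sarti–Taki preserves the affine Weierstrass model
`y² = x³ + t³(t⁴ − 1)·x` on the open set `x ≠ 0`. -/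
theorem stmt_6 (ζ : ℂ) (hζ : IsPrimitiveRoot ζ 16) (x y t : ℂ) (hx : x ≠ 0)
    (h : y ^ 2 = x ^ 3 + t ^ 3 * (t ^ 4 - 1) * x) :
    (ζ ^ 9 * ((x ^ 3 * y - y ^ 3) / x ^ 3)) ^ 2 =
      (ζ ^ 6 * ((y ^ 2 - x ^ 3) / x ^ 2)) ^ 3 +
        (ζ ^ 4 * t) ^ 3 * ((ζ ^ 4 * t) ^ 4 - 1) * (ζ ^ 6 * ((y ^ 2 - x ^ 3) / x ^ 2)) := by
  have h16 : ζ ^ 16 = 1 := hζ.pow_eq_one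
  have key : (ζ ^ 4 * t) ^ 4 = t ^ 4 := by
    rw [mul_pow, ← pow_mul]; norm_num [h16]
  rw [key]
  field_simp
  linear_combination (ζ ^ 18 * (y ^ 2 - x ^ 3) * x ^ 3) * h
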